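/- Let X : ℝ → ℝ be continuously differentiable with X(x) > 0 for all x, let σ be a one-parameter group of diffeomorphisms generated by X, and let h ∈ ℝ, m ∈ ℤ. Let a, b : ℝ → ℝ be measurable functions such that x ↦ a(x)b(σ(mh,x))/X(x) and x ↦ b(x)a(σ(−mh,x))/X(x) are integrable on ℝ. Then ∫_ℝ a(x) b(σ(mh,x)) / X(x) dx = ∫_ℝ b(x) a(σ(−mh,x)) / X(x) dx. (Equivalently, the adjoint of the shift operator E^m with respect to the duality map ⟨η,K⟩ = ∫ ηK dx/X is E^{−m}, and the trace form Tr(A) = ∫ res(A𝓔^{−1}) dx/X is symmetric: Tr(AB) = Tr(BA) on monomial shift operators A = a𝓔^m, B = b𝓔^{−m}.) -/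

import Mathlib

open MeasureTheory

/-- The adjoint of the shift operator `E^m` with respect to the duality
map `⟨η,K⟩ = ∫ ηK dx/X` is `E^{−m}`: the trace form is symmetric on monomial shift
operators. -/
theorem statement2 (X : ℝ → ℝ) (σ : ℝ → ℝ → ℝ) (h : ℝ) (m : ℤ) (a b : ℝ → ℝ)
    (hX : ContDiff ℝ 1 X) (hXpos : ∀ x : ℝ, 0 < X x)
    (hσ0 : ∀ x : ℝ, σ 0 x = x)
    (hgrp : ∀ s t x : ℝ, σ s (σ t x) = σ (s + t) x)
    (hflow : ∀ t x : ℝ, HasDerivAt (fun s => σ s x) (X (σ t x)) t)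
    (ha : Measurable a) (hb : Measurable b)
    (h1 : Integrable (fun x => a x * b (σ ((m : ℝ) * h) x) / X x))
    (h2 : Integrable (fun x => b x * a (σ (-(m : ℝ) * h) x) / X x)) :
    (∫ x : ℝ, a x * b (σ ((m : ℝ) * h) x) / X x)
      = ∫ x : ℝ, b x * a (σ (-(m : ℝ) * h) x) / X x := by
  set s : ℝ := (m : ℝ) * h with hsdef
  have hXc : Continuous X := hX.continuous
  have hXne : ∀ x, X x ≠ 0 := fun x => (hXpos x).ne'
  have hXinvc : Continuous fun x => (X x)⁻¹ := hXc.inv₀ hXne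
  set F : ℝ → ℝ := fun x => ∫ t in (0:ℝ)..x, (X t)⁻¹ with hFdef
  have hF' : ∀ x, HasDerivAt F (X x)⁻¹ x := fun x =>
    intervalIntegral.integral_hasDerivAt_right
      (hXinvc.intervalIntegrable 0 x)
      (hXinvc.stronglyMeasurable.stronglyMeasurableAtFilter)
      hXinvc.continuousAt
  have hFmono : StrictMono F := by
    apply strictMono_of_deriv_pos
    intro x
    rw [(hF' x).deriv]
    exact inv_pos.mpr (hXpos x)
  have hFinj : Function.Injective F := hFmono.injective
  -- key identity : F (σ t x) = F x + t
  have key : ∀ t x : ℝ, F (σ t x) = F x + t := by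
    intro t x
    have hg : ∀ u : ℝ, HasDerivAt (fun u => F (σ u x) - u) 0 u := by
      intro u
      have h1' := (hF' (σ u x)).comp u (hflow u x)
      have hc : (X (σ u x))⁻¹ * X (σ u x) = 1 := inv_mul_cancel₀ (hXne _)
      have := h1'.sub (hasDerivAt_id u)
      exact this.congr_deriv (by simp [hc])
    have hconst := is_const_of_deriv_eq_zero
      (fun u => (hg u).differentiableAt) (fun u => (hg u).deriv) t 0
    simp only [hσ0, sub_zero] at hconst
    linarith
  -- inverse of F
  set Finv : ℝ → ℝ := Function.invFun F with hFinvdef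
  have hFinv : ∀ x, Finv (F x) = x := fun x => Function.leftInverse_invFun hFinj x
  set S : Set ℝ := Set.range F with hSdef
  have hSmeas : MeasurableSet S := by
    have : IsPreconnected S := isPreconnected_range (continuous_iff_continuousAt.mpr fun x => (hF' x).continuousAt)
    exact this.ordConnected.measurableSet
  -- shift invariance of S
  have hshift : ∀ t u : ℝ, u ∈ S → u + t ∈ S := by
    rintro t u ⟨x, rfl⟩
    exact ⟨σ t x, key t x⟩
  have hmemiff : ∀ u : ℝ, u - s ∈ S ↔ u ∈ S := by
    intro u
    constructor
    · intro hu
      have := hshift s _ hu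
      simpa using this
    · intro hu
      exact hshift (-s) u hu
  -- change of variables lemma
  have cov : ∀ g : ℝ → ℝ, ∫ u in S, g u = ∫ x, (X x)⁻¹ * g (F x) := by
    intro g
    have := integral_image_eq_integral_abs_deriv_smul (MeasurableSet.univ)
      (fun x _ => (hF' x).hasDerivWithinAt) (hFinj.injOn) g
    rw [Set.image_univ] at this
    rw [hSdef, this, Measure.restrict_univ]
    congr 1
    ext x
    rw [abs_of_pos (inv_pos.mpr (hXpos x)), smul_eq_mul]
  -- the two functions on S
  set g₁ : ℝ → ℝ := fun u => a (Finv u) * b (Finv (u + s)) with hg₁def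
  set g₂ : ℝ → ℝ := fun u => b (Finv u) * a (Finv (u + -s)) with hg₂def
  have hinv_shift : ∀ x : ℝ, Finv (F x + s) = σ s x := by
    intro x
    rw [← key s x, hFinv]
  have hinv_shift' : ∀ x : ℝ, Finv (F x + -s) = σ (-s) x := by
    intro x
    rw [← key (-s) x, hFinv]
  have e1 : (∫ x : ℝ, a x * b (σ s x) / X x) = ∫ u in S, g₁ u := by
    rw [cov g₁]
    congr 1
    ext x
    rw [hg₁def]
    simp only [hFinv, hinv_shift]
    field_simp
  have e2 : (∫ x : ℝ, b x * a (σ (-s) x) / X x) = ∫ u in S, g₂ u := by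
    rw [cov g₂]
    congr 1
    ext x
    rw [hg₂def]
    simp only [hFinv, hinv_shift']
    field_simp
  -- translation step
  have e3 : ∫ u in S, g₁ u = ∫ u in S, g₂ u := by
    rw [← integral_indicator hSmeas, ← integral_indicator hSmeas]
    have := integral_add_right_eq_self (μ := (volume : Measure ℝ))
      (S.indicator g₁) (-s)
    rw [← this]
    congr 1
    ext v
    by_cases hv : v ∈ S
    · have hv' : v + -s ∈ S := by
        have : v - s ∈ S := (hmemiff v).mpr hv
        simpa [sub_eq_add_neg] using this
      rw [Set.indicator_of_mem hv' , Set.indicator_of_mem hv]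
      rw [hg₁def, hg₂def]
      simp only []
      rw [add_assoc, neg_add_cancel, add_zero]
      ring
    · have hv' : ¬ (v + -s ∈ S) := by
        intro hc
        have : v - s ∈ S := by simpa [sub_eq_add_neg] using hc
        exact hv ((hmemiff v).mp this)
      rw [Set.indicator_of_notMem hv', Set.indicator_of_notMem hv]
  have hneg : (-(m : ℝ)) * h = -s := by rw [hsdef]; ring
  rw [hneg]
  rw [e1, e2, e3]
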